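/- Let c be a positive integer and let A be a real c×c matrix with nonpositive off-diagonal entries, zero row sums and zero column sums. If γ : Fin c → ℝ satisfies γ ⬝ᵥ (A *ᵥ (fun i => Real.exp (γ i))) = 0, then A *ᵥ (fun i => Real.exp (γ i)) = 0. -/
import Mathlib


open Matrix

theorem balanced_laplacian_zero_dissipation_equilibrium
    (c : ℕ) (hc : 0 < c) (A : Matrix (Fin c) (Fin c) ℝ)
    (hoff : ∀ i j, i ≠ j → A i j ≤ 0)
    (hrow : ∀ i, ∑ j, A i j = 0)
    (hcol : ∀ j, ∑ i, A i j = 0)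
    (γ : Fin c → ℝ)
    (hγ : γ ⬝ᵥ (A *ᵥ (fun i => Real.exp (γ i))) = 0) :
    A *ᵥ (fun i => Real.exp (γ i)) = 0 := by
  set g : Fin c → Fin c → ℝ := fun i j =>
    Real.exp (γ i) - Real.exp (γ j) - Real.exp (γ j) * (γ i - γ j) with hg
  -- g is nonnegative
  have hgnn : ∀ i j, 0 ≤ g i j := by
    intro i j
    have h1 := Real.add_one_le_exp (γ i - γ j)
    have h2 := Real.exp_pos (γ j)
    have h3 : Real.exp (γ j) * Real.exp (γ i - γ j) = Real.exp (γ i) := by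
      rw [← Real.exp_add]; ring_nf
    simp only [hg]
    nlinarith
  -- g is strictly positive when γ i ≠ γ j
  have hgpos : ∀ i j, γ i ≠ γ j → 0 < g i j := by
    intro i j hne
    have h1 := Real.add_one_lt_exp (x := γ i - γ j) (by intro h; apply hne; linarith)
    have h2 := Real.exp_pos (γ j)
    have h3 : Real.exp (γ j) * Real.exp (γ i - γ j) = Real.exp (γ i) := by
      rw [← Real.exp_add]; ring_nf
    simp only [hg]
    nlinarith
  have h1 : ∑ i, ∑ j, A i j * Real.exp (γ i) = 0 := by
    have : ∀ i : Fin c, ∑ j, A i j * Real.exp (γ i) = 0 := by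
      intro i; rw [← Finset.sum_mul, hrow]; ring
    simp [this]
  have h2 : ∑ i, ∑ j, A i j * Real.exp (γ j) = 0 := by
    rw [Finset.sum_comm]
    have : ∀ j : Fin c, ∑ i, A i j * Real.exp (γ j) = 0 := by
      intro j; rw [← Finset.sum_mul, hcol]; ring
    simp [this]
  have h3 : ∑ i, ∑ j, A i j * (Real.exp (γ j) * γ i) = 0 := by
    rw [← hγ]
    simp only [dotProduct, mulVec]
    congr 1; funext i
    rw [Finset.mul_sum]
    congr 1; funext j
    ring
  have h4 : ∑ i, ∑ j, A i j * (Real.exp (γ j) * γ j) = 0 := by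
    rw [Finset.sum_comm]
    have : ∀ j : Fin c, ∑ i, A i j * (Real.exp (γ j) * γ j) = 0 := by
      intro j; rw [← Finset.sum_mul, hcol]; ring
    simp [this]
  have hsum : ∑ i, ∑ j, A i j * g i j = 0 := by
    have expand : ∀ i j : Fin c, A i j * g i j =
        A i j * Real.exp (γ i) - A i j * Real.exp (γ j)
        - A i j * (Real.exp (γ j) * γ i) + A i j * (Real.exp (γ j) * γ j) := by
      intro i j; simp only [hg]; ring
    simp_rw [expand, Finset.sum_add_distrib, Finset.sum_sub_distrib, h1, h2, h3, h4]
    ring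
  -- each term is nonpositive
  have hterm : ∀ i j : Fin c, A i j * g i j ≤ 0 := by
    intro i j
    by_cases h : i = j
    · subst h; simp [hg]
    · exact mul_nonpos_of_nonpos_of_nonneg (hoff i j h) (hgnn i j)
  -- so each term is zero
  have hzero : ∀ i j : Fin c, A i j * g i j = 0 := by
    have houter : ∀ i ∈ Finset.univ, ∑ j, A i j * g i j ≤ 0 := by
      intro i _
      exact Finset.sum_nonpos (fun j _ => hterm i j)
    have h0 := (Finset.sum_eq_zero_iff_of_nonpos houter).mp hsum
    intro i j
    have hi := h0 i (Finset.mem_univ i)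
    have := (Finset.sum_eq_zero_iff_of_nonpos (fun j _ => hterm i j)).mp hi
    exact this j (Finset.mem_univ j)
  -- hence A i j * exp (γ j) = A i j * exp (γ i)
  have hkey : ∀ i j : Fin c, A i j * Real.exp (γ j) = A i j * Real.exp (γ i) := by
    intro i j
    by_cases h : i = j
    · subst h; rfl
    · by_cases hγij : γ i = γ j
      · rw [hγij]
      · have hg0 := hgpos i j hγij
        have := hzero i j
        have hA : A i j = 0 := by
          rcases mul_eq_zero.mp this with h' | h'
          · exact h'
          · exact absurd h' (ne_of_gt hg0)
        rw [hA]; ring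
  funext i
  show ∑ j, A i j * Real.exp (γ j) = 0
  calc ∑ j, A i j * Real.exp (γ j) = ∑ j, A i j * Real.exp (γ i) := by
        exact Finset.sum_congr rfl (fun j _ => hkey i j)
    _ = (∑ j, A i j) * Real.exp (γ i) := by rw [Finset.sum_mul]
    _ = 0 := by rw [hrow]; ring
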